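/- Under the assumptions of the previous statement, define for m ≥ 1 and n ≥ m the truncated process x_n(m) = Σ_{k=n-m+1}^n b_k ∏_{j=k+1}^n a_j and the remainder x*_n(m) = x_n − x_n(m). Then sup_{n ≥ m} E[|x*_n(m)|^δ] ≤ L* ρ^m, where L* = |x_0|^δ + E[|b_1|^δ]/(1−ρ). -/

import Mathlib

open MeasureTheory ProbabilityTheory Finset
open scoped NNReal ENNReal

namespace Stmt12Aux

noncomputable def F (x0 : ℝ) : ℕ → (ℕ → ℝ × ℝ) → ℝ
  | 0 => fun _ => x0
  | n + 1 => fun u => (u n).1 * F x0 n u + (u n).2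

lemma F_meas (x0 : ℝ) : ∀ n, Measurable (F x0 n)
  | 0 => measurable_const
  | n + 1 => ((measurable_pi_apply n).fst.mul (F_meas x0 n)).add (measurable_pi_apply n).snd

lemma F_congr (x0 : ℝ) : ∀ n (u u' : ℕ → ℝ × ℝ), (∀ i < n, u i = u' i) → F x0 n u = F x0 n u'
  | 0, _, _, _ => rfl
  | n + 1, u, u', h => by
    simp only [F, h n (Nat.lt_succ_self n),
      F_congr x0 n u u' (fun i hi => h i (hi.trans (Nat.lt_succ_self n)))]

lemma real_add_rpow_le {δ : ℝ} (hδ0 : 0 ≤ δ) (hδ1 : δ ≤ 1) {u v : ℝ} (hu : 0 ≤ u) (hv : 0 ≤ v) :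
    (u + v) ^ δ ≤ u ^ δ + v ^ δ := by
  lift u to ℝ≥0 using hu
  lift v to ℝ≥0 using hv
  exact_mod_cast NNReal.rpow_add_le_add_rpow u v hδ0 hδ1

lemma key_indep {Ω : Type*} [MeasurableSpace Ω] {μ : Measure Ω} [IsProbabilityMeasure μ]
    (f : ℕ → Ω → ℝ × ℝ) (hf : ∀ i, Measurable (f i))
    (hiid : iIndepFun f μ) (n : ℕ)
    (φ : (ℕ → ℝ × ℝ) → ℝ≥0∞) (hφ : Measurable φ)
    (hφn : ∀ u u' : ℕ → ℝ × ℝ, (∀ i < n, u i = u' i) → φ u = φ u')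
    (ψ : ℝ × ℝ → ℝ≥0∞) (hψ : Measurable ψ) :
    IndepFun (fun ω => φ (fun i => f i ω)) (fun ω => ψ (f n ω)) μ := by
  have hd : Disjoint (range n) ({n} : Finset ℕ) := by
    simp [Finset.disjoint_singleton_right]
  have I := hiid.indepFun_finset (range n) {n} hd hf
  set ext : (↥(range n) → ℝ × ℝ) → (ℕ → ℝ × ℝ) :=
    fun v i => if h : i ∈ range n then v ⟨i, h⟩ else 0 with hext
  have hextm : Measurable ext := by
    apply measurable_pi_lambda
    intro i
    by_cases h : i ∈ range n
    · simp only [hext, dif_pos h]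
      exact measurable_pi_apply _
    · simp only [hext, dif_neg h]
      exact measurable_const
  have I2 := I.comp (φ := φ ∘ ext)
    (ψ := fun v : ↥({n} : Finset ℕ) → ℝ × ℝ => ψ (v ⟨n, mem_singleton_self n⟩))
    (hφ.comp hextm) (hψ.comp (measurable_pi_apply _))
  have h1 : ((φ ∘ ext) ∘ fun ω (i : ↥(range n)) => f i ω) = fun ω => φ (fun i => f i ω) := by
    funext ω
    exact hφn _ _ (fun i hi => by simp only [hext, dif_pos (Finset.mem_range.mpr hi)])
  have h2 : ((fun v : ↥({n} : Finset ℕ) → ℝ × ℝ => ψ (v ⟨n, mem_singleton_self n⟩)) ∘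
      fun ω (i : ↥({n} : Finset ℕ)) => f i ω) = fun ω => ψ (f n ω) := rfl
  rw [h1, h2] at I2
  exact I2

end Stmt12Aux

/-- For the random-coefficient autoregression `x_n = a_n x_{n-1} + b_n`, `x_0 = x₀`,
with `(a_n, b_n)_{n≥1}` i.i.d., `ρ = E[|a_1|^δ] < 1` and `E[|b_1|^δ] < ∞` for some
`0 < δ ≤ 1`, the truncated process `x_n(m) = Σ_{k=n-m+1}^n b_k ∏_{j=k+1}^n a_j` and remainder
`x*_n(m) = x_n - x_n(m)` satisfy `sup_{n≥m} E[|x*_n(m)|^δ] ≤ L* ρ^m`, where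
`L* = |x₀|^δ + E[|b_1|^δ]/(1-ρ)`. -/
theorem stmt_12 {Ω : Type*} [MeasurableSpace Ω] (μ : Measure Ω) [IsProbabilityMeasure μ]
    (a b : ℕ → Ω → ℝ) (hameas : ∀ n, Measurable (a n)) (hbmeas : ∀ n, Measurable (b n))
    (hiid : iIndepFun (fun n ω => (a (n + 1) ω, b (n + 1) ω)) μ)
    (hid : ∀ n : ℕ, 1 ≤ n →
      Measure.map (fun ω => (a n ω, b n ω)) μ = Measure.map (fun ω => (a 1 ω, b 1 ω)) μ)
    {δ : ℝ} (hδ0 : 0 < δ) (hδ1 : δ ≤ 1)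
    (haint : Integrable (fun ω => |a 1 ω| ^ δ) μ)
    (hρ : ∫ ω, |a 1 ω| ^ δ ∂μ < 1)
    (hbint : Integrable (fun ω => |b 1 ω| ^ δ) μ)
    (x0 : ℝ) (x : ℕ → Ω → ℝ) (hx0 : ∀ ω, x 0 ω = x0)
    (hxrec : ∀ n ω, x (n + 1) ω = a (n + 1) ω * x n ω + b (n + 1) ω) :
    ∀ m : ℕ, 1 ≤ m → ∀ n : ℕ, m ≤ n →
      ∫⁻ ω, ENNReal.ofReal
          (|x n ω - ∑ k ∈ Icc (n - m + 1) n, b k ω * ∏ j ∈ Icc (k + 1) n, a j ω| ^ δ) ∂μ ≤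
        ENNReal.ofReal ((|x0| ^ δ +
          (∫ ω, |b 1 ω| ^ δ ∂μ) / (1 - ∫ ω, |a 1 ω| ^ δ ∂μ)) *
            (∫ ω, |a 1 ω| ^ δ ∂μ) ^ m) := by
  set ρ := ∫ ω, |a 1 ω| ^ δ ∂μ with hρdef
  set B := ∫ ω, |b 1 ω| ^ δ ∂μ with hBdef
  have hρ0 : 0 ≤ ρ := integral_nonneg fun ω => Real.rpow_nonneg (abs_nonneg _) δ
  have hB0 : 0 ≤ B := integral_nonneg fun ω => Real.rpow_nonneg (abs_nonneg _) δ
  have h1ρ : 0 < 1 - ρ := by linarith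
  set Lstar := |x0| ^ δ + B / (1 - ρ) with hLdef
  have hP0 : (0:ℝ) ≤ |x0| ^ δ := Real.rpow_nonneg (abs_nonneg _) δ
  have hLs0 : 0 ≤ Lstar := add_nonneg hP0 (div_nonneg hB0 h1ρ.le)
  set f : ℕ → Ω → ℝ × ℝ := fun i ω => (a (i + 1) ω, b (i + 1) ω) with hfdef
  have hfm : ∀ i, Measurable (f i) := fun i => (hameas _).prodMk (hbmeas _)
  have hx_eq : ∀ n ω, x n ω = Stmt12Aux.F x0 n (fun i => f i ω) := by
    intro n
    induction n with
    | zero => intro ω; simp [Stmt12Aux.F, hx0]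
    | succ n ih => intro ω; simp [Stmt12Aux.F, hxrec, ih, hfdef]
  have hxm : ∀ n, Measurable (x n) := by
    intro n
    have h : Measurable fun ω => Stmt12Aux.F x0 n (fun i => f i ω) :=
      (Stmt12Aux.F_meas x0 n).comp (measurable_pi_lambda _ hfm)
    have heq : x n = fun ω => Stmt12Aux.F x0 n (fun i => f i ω) := funext (hx_eq n)
    rw [heq]; exact h
  have hrpm : Measurable fun y : ℝ => y ^ δ := (Real.continuous_rpow_const hδ0.le).measurable
  set Xδ : ℕ → Ω → ℝ≥0∞ := fun k ω => ENNReal.ofReal (|x k ω| ^ δ) with hXδdef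
  set Aδ : ℕ → Ω → ℝ≥0∞ := fun j ω => ENNReal.ofReal (|a j ω| ^ δ) with hAδdef
  set Bδ : ℕ → Ω → ℝ≥0∞ := fun j ω => ENNReal.ofReal (|b j ω| ^ δ) with hBδdef
  have hAm : ∀ j, Measurable (Aδ j) := fun j => (hrpm.comp (hameas j).abs).ennreal_ofReal
  have hXm : ∀ k, Measurable (Xδ k) := fun k => (hrpm.comp (hxm k).abs).ennreal_ofReal
  have hψm : Measurable fun p : ℝ × ℝ => ENNReal.ofReal (|p.1| ^ δ) :=
    (hrpm.comp measurable_fst.abs).ennreal_ofReal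
  have hψm2 : Measurable fun p : ℝ × ℝ => ENNReal.ofReal (|p.2| ^ δ) :=
    (hrpm.comp measurable_snd.abs).ennreal_ofReal
  have hA1 : ∀ j, 1 ≤ j → ∫⁻ ω, Aδ j ω ∂μ = ENNReal.ofReal ρ := by
    intro j hj
    calc ∫⁻ ω, Aδ j ω ∂μ
        = ∫⁻ p, ENNReal.ofReal (|p.1| ^ δ) ∂(Measure.map (fun ω => (a j ω, b j ω)) μ) :=
          (lintegral_map hψm ((hameas j).prodMk (hbmeas j))).symm
      _ = ∫⁻ p, ENNReal.ofReal (|p.1| ^ δ) ∂(Measure.map (fun ω => (a 1 ω, b 1 ω)) μ) := by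
          rw [hid j hj]
      _ = ∫⁻ ω, ENNReal.ofReal (|a 1 ω| ^ δ) ∂μ :=
          lintegral_map hψm ((hameas 1).prodMk (hbmeas 1))
      _ = ENNReal.ofReal ρ := (ofReal_integral_eq_lintegral_ofReal haint
          (Filter.Eventually.of_forall fun ω => Real.rpow_nonneg (abs_nonneg _) δ)).symm
  have hB1 : ∀ j, 1 ≤ j → ∫⁻ ω, Bδ j ω ∂μ = ENNReal.ofReal B := by
    intro j hj
    calc ∫⁻ ω, Bδ j ω ∂μ
        = ∫⁻ p, ENNReal.ofReal (|p.2| ^ δ) ∂(Measure.map (fun ω => (a j ω, b j ω)) μ) :=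
          (lintegral_map hψm2 ((hameas j).prodMk (hbmeas j))).symm
      _ = ∫⁻ p, ENNReal.ofReal (|p.2| ^ δ) ∂(Measure.map (fun ω => (a 1 ω, b 1 ω)) μ) := by
          rw [hid j hj]
      _ = ∫⁻ ω, ENNReal.ofReal (|b 1 ω| ^ δ) ∂μ :=
          lintegral_map hψm2 ((hameas 1).prodMk (hbmeas 1))
      _ = ENNReal.ofReal B := (ofReal_integral_eq_lintegral_ofReal hbint
          (Filter.Eventually.of_forall fun ω => Real.rpow_nonneg (abs_nonneg _) δ)).symm
  -- key independence computation
  have hIndep : ∀ k n : ℕ, k ≤ n →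
      ∫⁻ ω, (Xδ k ω * ∏ j ∈ Icc (k + 1) n, Aδ j ω) * Aδ (n + 1) ω ∂μ
        = (∫⁻ ω, Xδ k ω * ∏ j ∈ Icc (k + 1) n, Aδ j ω ∂μ) * ENNReal.ofReal ρ := by
    intro k n hkn
    set φ : (ℕ → ℝ × ℝ) → ℝ≥0∞ := fun u =>
      ENNReal.ofReal (|Stmt12Aux.F x0 k u| ^ δ) *
        ∏ j ∈ Icc (k + 1) n, ENNReal.ofReal (|(u (j - 1)).1| ^ δ) with hφdef
    have hφm : Measurable φ := by
      apply Measurable.mul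
      · exact (hrpm.comp (Stmt12Aux.F_meas x0 k).abs).ennreal_ofReal
      · exact Finset.measurable_prod _ fun j _ =>
          (hrpm.comp (measurable_pi_apply (j - 1)).fst.abs).ennreal_ofReal
    have hφn : ∀ u u' : ℕ → ℝ × ℝ, (∀ i < n, u i = u' i) → φ u = φ u' := by
      intro u u' h
      simp only [hφdef]
      rw [Stmt12Aux.F_congr x0 k u u' (fun i hi => h i (lt_of_lt_of_le hi hkn))]
      congr 1
      refine Finset.prod_congr rfl fun j hj => ?_
      rw [h (j - 1) (by rw [Finset.mem_Icc] at hj; omega)]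
    have I := Stmt12Aux.key_indep f hfm hiid n φ hφm hφn
      (fun p => ENNReal.ofReal (|p.1| ^ δ)) hψm
    have hφeq : ∀ ω, φ (fun i => f i ω) = Xδ k ω * ∏ j ∈ Icc (k + 1) n, Aδ j ω := by
      intro ω
      simp only [hφdef]
      rw [← hx_eq k ω]
      congr 1
      refine Finset.prod_congr rfl fun j hj => ?_
      have hj1 : 1 ≤ j := by rw [Finset.mem_Icc] at hj; omega
      have hj2 : j - 1 + 1 = j := by omega
      simp only [hfdef, hAδdef, hj2]
    have hres := lintegral_mul_eq_lintegral_mul_lintegral_of_indepFun''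
      ((hφm.comp (measurable_pi_lambda _ hfm)).aemeasurable)
      ((hψm.comp (hfm n)).aemeasurable) I
    have hAe : ∀ ω, (fun p : ℝ × ℝ => ENNReal.ofReal (|p.1| ^ δ)) (f n ω) = Aδ (n + 1) ω :=
      fun ω => rfl
    calc ∫⁻ ω, (Xδ k ω * ∏ j ∈ Icc (k + 1) n, Aδ j ω) * Aδ (n + 1) ω ∂μ
        = ∫⁻ ω, φ (fun i => f i ω) *
            (fun p : ℝ × ℝ => ENNReal.ofReal (|p.1| ^ δ)) (f n ω) ∂μ :=
          lintegral_congr fun ω => by rw [hφeq ω, hAe ω]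
      _ = (∫⁻ ω, φ (fun i => f i ω) ∂μ) *
            ∫⁻ ω, (fun p : ℝ × ℝ => ENNReal.ofReal (|p.1| ^ δ)) (f n ω) ∂μ := hres
      _ = (∫⁻ ω, Xδ k ω * ∏ j ∈ Icc (k + 1) n, Aδ j ω ∂μ) * ENNReal.ofReal ρ := by
          rw [lintegral_congr hφeq, show (∫⁻ ω, (fun p : ℝ × ℝ =>
            ENNReal.ofReal (|p.1| ^ δ)) (f n ω) ∂μ) = ∫⁻ ω, Aδ (n + 1) ω ∂μ from
            lintegral_congr hAe, hA1 (n + 1) (by omega)]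
  -- geometric factorization
  have hC : ∀ k n : ℕ, k ≤ n → ∫⁻ ω, Xδ k ω * ∏ j ∈ Icc (k + 1) n, Aδ j ω ∂μ
      = (∫⁻ ω, Xδ k ω ∂μ) * ENNReal.ofReal ρ ^ (n - k) := by
    intro k n hkn
    induction n, hkn using Nat.le_induction with
    | base => simp [Finset.Icc_eq_empty (by omega : ¬ k + 1 ≤ k)]
    | succ n hn ih =>
      calc ∫⁻ ω, Xδ k ω * ∏ j ∈ Icc (k + 1) (n + 1), Aδ j ω ∂μ
          = ∫⁻ ω, (Xδ k ω * ∏ j ∈ Icc (k + 1) n, Aδ j ω) * Aδ (n + 1) ω ∂μ :=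
            lintegral_congr fun ω => by
              rw [Finset.prod_Icc_succ_top (by omega : k + 1 ≤ n + 1), mul_assoc]
        _ = ((∫⁻ ω, Xδ k ω ∂μ) * ENNReal.ofReal ρ ^ (n - k)) * ENNReal.ofReal ρ := by
            rw [hIndep k n hn, ih]
        _ = (∫⁻ ω, Xδ k ω ∂μ) * ENNReal.ofReal ρ ^ (n + 1 - k) := by
            rw [mul_assoc, ← pow_succ, show n + 1 - k = (n - k) + 1 by omega]
  -- uniform moment bound
  have hL : ∀ k, ∫⁻ ω, Xδ k ω ∂μ ≤ ENNReal.ofReal Lstar := by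
    intro k
    induction k with
    | zero =>
      have h0 : ∀ ω, Xδ 0 ω = ENNReal.ofReal (|x0| ^ δ) := fun ω => by
        simp only [hXδdef, hx0]
      rw [lintegral_congr h0, lintegral_const, measure_univ, mul_one]
      exact ENNReal.ofReal_le_ofReal (le_add_of_nonneg_right (div_nonneg hB0 h1ρ.le))
    | succ n ih =>
      have hstep1 : ∀ ω, Xδ (n + 1) ω ≤ Aδ (n + 1) ω * Xδ n ω + Bδ (n + 1) ω := by
        intro ω
        have hx' : x (n + 1) ω = a (n + 1) ω * x n ω + b (n + 1) ω := hxrec n ω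
        simp only [hXδdef, hAδdef, hBδdef, hx']
        calc ENNReal.ofReal (|a (n + 1) ω * x n ω + b (n + 1) ω| ^ δ)
            ≤ ENNReal.ofReal (|a (n + 1) ω * x n ω| ^ δ + |b (n + 1) ω| ^ δ) := by
              apply ENNReal.ofReal_le_ofReal
              calc |a (n + 1) ω * x n ω + b (n + 1) ω| ^ δ
                  ≤ (|a (n + 1) ω * x n ω| + |b (n + 1) ω|) ^ δ :=
                    Real.rpow_le_rpow (abs_nonneg _) (abs_add_le _ _) hδ0.le
                _ ≤ |a (n + 1) ω * x n ω| ^ δ + |b (n + 1) ω| ^ δ :=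
                    Stmt12Aux.real_add_rpow_le hδ0.le hδ1 (abs_nonneg _) (abs_nonneg _)
          _ = ENNReal.ofReal (|a (n + 1) ω| ^ δ) * ENNReal.ofReal (|x n ω| ^ δ) +
              ENNReal.ofReal (|b (n + 1) ω| ^ δ) := by
              rw [ENNReal.ofReal_add (Real.rpow_nonneg (abs_nonneg _) δ)
                (Real.rpow_nonneg (abs_nonneg _) δ), abs_mul,
                Real.mul_rpow (abs_nonneg _) (abs_nonneg _),
                ENNReal.ofReal_mul (Real.rpow_nonneg (abs_nonneg _) δ)]
      have hmulint : ∫⁻ ω, Aδ (n + 1) ω * Xδ n ω ∂μ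
          = (∫⁻ ω, Xδ n ω ∂μ) * ENNReal.ofReal ρ := by
        have h0 := hIndep n n le_rfl
        rw [Finset.Icc_eq_empty (by omega : ¬ n + 1 ≤ n)] at h0
        simp only [Finset.prod_empty, mul_one] at h0
        rw [← h0]
        exact lintegral_congr fun ω => mul_comm _ _
      calc ∫⁻ ω, Xδ (n + 1) ω ∂μ
          ≤ ∫⁻ ω, Aδ (n + 1) ω * Xδ n ω + Bδ (n + 1) ω ∂μ := lintegral_mono hstep1
        _ = (∫⁻ ω, Aδ (n + 1) ω * Xδ n ω ∂μ) + ∫⁻ ω, Bδ (n + 1) ω ∂μ :=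
            lintegral_add_left ((hAm (n + 1)).mul (hXm n)) _
        _ = (∫⁻ ω, Xδ n ω ∂μ) * ENNReal.ofReal ρ + ENNReal.ofReal B := by
            rw [hmulint, hB1 (n + 1) (by omega)]
        _ ≤ ENNReal.ofReal Lstar * ENNReal.ofReal ρ + ENNReal.ofReal B :=
            add_le_add_left (mul_le_mul_left ih _) _
        _ = ENNReal.ofReal (Lstar * ρ + B) := by
            rw [← ENNReal.ofReal_mul hLs0, ← ENNReal.ofReal_add (mul_nonneg hLs0 hρ0) hB0]
        _ ≤ ENNReal.ofReal Lstar := by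
            apply ENNReal.ofReal_le_ofReal
            have hsplit : Lstar * ρ + B = |x0| ^ δ * ρ + B / (1 - ρ) := by
              rw [hLdef]; field_simp; ring
            rw [hsplit, hLdef]
            have := mul_nonneg hP0 h1ρ.le
            nlinarith
  -- the algebraic identity for the remainder
  have hident : ∀ k n : ℕ, k ≤ n → ∀ ω, x n ω =
      x k ω * ∏ j ∈ Icc (k + 1) n, a j ω +
        ∑ i ∈ Icc (k + 1) n, b i ω * ∏ j ∈ Icc (i + 1) n, a j ω := by
    intro k n hkn
    induction n, hkn using Nat.le_induction with
    | base => intro ω; simp [Finset.Icc_eq_empty (by omega : ¬ k + 1 ≤ k)]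
    | succ n hn ih =>
      intro ω
      have hsum : ∑ i ∈ Icc (k + 1) n, b i ω * ∏ j ∈ Icc (i + 1) (n + 1), a j ω
          = (∑ i ∈ Icc (k + 1) n, b i ω * ∏ j ∈ Icc (i + 1) n, a j ω) * a (n + 1) ω := by
        rw [Finset.sum_mul]
        refine Finset.sum_congr rfl fun i hi => ?_
        rw [Finset.prod_Icc_succ_top (show i + 1 ≤ n + 1 by
          rw [Finset.mem_Icc] at hi; omega), mul_assoc]
      rw [hxrec n ω, ih ω, Finset.prod_Icc_succ_top (by omega : k + 1 ≤ n + 1),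
        Finset.sum_Icc_succ_top (by omega : k + 1 ≤ n + 1), hsum,
        show Icc (n + 1 + 1) (n + 1) = (∅ : Finset ℕ) from Finset.Icc_eq_empty (by omega),
        Finset.prod_empty]
      ring
  -- final assembly
  intro m hm n hnm
  have hkn : n - m ≤ n := Nat.sub_le n m
  have hptw : ∀ ω, ENNReal.ofReal
      (|x n ω - ∑ k ∈ Icc (n - m + 1) n, b k ω * ∏ j ∈ Icc (k + 1) n, a j ω| ^ δ)
      = Xδ (n - m) ω * ∏ j ∈ Icc (n - m + 1) n, Aδ j ω := by
    intro ω
    rw [hident (n - m) n hkn ω, add_sub_cancel_right]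
    simp only [hXδdef, hAδdef]
    rw [abs_mul, Finset.abs_prod,
      Real.mul_rpow (abs_nonneg _) (Finset.prod_nonneg fun j _ => abs_nonneg _),
      ← Real.finset_prod_rpow _ _ (fun j _ => abs_nonneg _) δ,
      ENNReal.ofReal_mul (Real.rpow_nonneg (abs_nonneg _) δ),
      ENNReal.ofReal_prod_of_nonneg (fun j _ => Real.rpow_nonneg (abs_nonneg _) δ)]
  rw [lintegral_congr hptw, hC (n - m) n hkn, show n - (n - m) = m by omega]
  calc (∫⁻ ω, Xδ (n - m) ω ∂μ) * ENNReal.ofReal ρ ^ m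
      ≤ ENNReal.ofReal Lstar * ENNReal.ofReal ρ ^ m := mul_le_mul_left (hL _) _
    _ = ENNReal.ofReal (Lstar * ρ ^ m) := by
        rw [← ENNReal.ofReal_pow hρ0, ← ENNReal.ofReal_mul hLs0]
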